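/- Let D be a directed graph and R a reorientation of its transitive closure tc(D). Define orn_R(v) as the inclusion-maximal ornament of D at v contained in the set of vertices u admitting a directed path to v within the reversed edges rev(R). Then orn_R is an ornamentation of D. -/

import Mathlib

/-- A directed path from `u` to `v` in the digraph `D` using only vertices of `U`. -/
def pathIn {V : Type*} (D : V → V → Prop) (U : Set V) (u v : V) : Prop :=
  Relation.ReflTransGen (fun a b => D a b ∧ a ∈ U ∧ b ∈ U) u v

/-- An ornament of `D` at `v`. -/
def IsOrnament {V : Type*} (D : V → V → Prop) (v : V) (U : Set V) : Prop :=
  v ∈ U ∧ ∀ u ∈ U, pathIn D U u v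

/-- An ornamentation of `D`. -/
def IsOrnamentation {V : Type*} (D : V → V → Prop) (O : V → Set V) : Prop :=
  (∀ v, IsOrnament D v (O v)) ∧ ∀ u v, u ∈ O v → O u ⊆ O v

/-- The inclusion maximal ornament of `D` at `v` contained in `X`. -/
def maxOrnIn {V : Type*} (D : V → V → Prop) (v : V) (X : Set V) : Set V :=
  ⋃₀ {U | IsOrnament D v U ∧ U ⊆ X}

/-- The ornamentation `orn_R` associated to a reorientation of `tc(D)` with
reversed edge set `rev`: the maximal ornament at `v` contained in the set of
vertices having a directed path to `v` within `rev`. -/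
def ornOfRev {V : Type*} (D rev : V → V → Prop) (v : V) : Set V :=
  maxOrnIn D v {u | Relation.ReflTransGen rev u v}

theorem pathIn_mono {V : Type*} {D : V → V → Prop} {U W : Set V} (h : U ⊆ W)
    {u v : V} (hp : pathIn D U u v) : pathIn D W u v :=
  Relation.ReflTransGen.mono (fun _ _ ⟨hd, ha, hb⟩ => ⟨hd, h ha, h hb⟩) u v hp

theorem mem_ornOfRev {V : Type*} {D rev : V → V → Prop} {v x : V} (U : Set V)
    (hU : IsOrnament D v U) (hUX : U ⊆ {u | Relation.ReflTransGen rev u v})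
    (hx : x ∈ U) : x ∈ ornOfRev D rev v :=
  Set.mem_sUnion.2 ⟨U, ⟨hU, hUX⟩, hx⟩

/-- For any reorientation `R` of `tc(D)`, the map `orn_R` is an ornamentation of `D`. -/
theorem ornOfRev_isOrnamentation {V : Type*} (D rev : V → V → Prop)
    (hrev : ∀ u v, rev u v → Relation.TransGen D u v) :
    IsOrnamentation D (ornOfRev D rev) := by
  have horn : ∀ v, IsOrnament D v (ornOfRev D rev v) := by
    intro v
    constructor
    · exact mem_ornOfRev {v} ⟨rfl, fun u hu => by cases hu; exact Relation.ReflTransGen.refl⟩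
        (by intro x hx; cases hx; exact Relation.ReflTransGen.refl) rfl
    · rintro u ⟨U, ⟨hU, hUX⟩, huU⟩
      exact pathIn_mono (fun x hx => mem_ornOfRev U hU hUX hx) (hU.2 u huU)
  refine ⟨horn, ?_⟩
  rintro u v ⟨U, ⟨hU, hUX⟩, huU⟩ x hx
  refine mem_ornOfRev (ornOfRev D rev u ∪ U) ⟨Or.inr hU.1, ?_⟩ ?_ (Or.inl hx)
  · intro w hw
    cases hw with
    | inl hw =>
      exact (pathIn_mono (Set.subset_union_left) ((horn u).2 w hw)).trans
        (pathIn_mono (Set.subset_union_right) (hU.2 u huU))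
    | inr hw => exact pathIn_mono (Set.subset_union_right) (hU.2 w hw)
  · intro w hw
    cases hw with
    | inl hw =>
      obtain ⟨W, ⟨hW, hWX⟩, hwW⟩ := hw
      exact (hWX hwW).trans (hUX huU)
    | inr hw => exact hUX hw
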